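/- Let d ≥ 1 be an integer, α > 0, Λ ≥ 1, G ≥ 0, L ≥ 0, and let g : ℝ^d → ℝ satisfy |g(u)| ≤ G and |g(u) − g(v)| ≤ L|u − v| for all unit vectors u, v ∈ ℝ^d. Let σ_1, σ_2 be invertible d×d real matrices with operator norms ‖σ_i‖ ≤ Λ and ‖σ_i^{−1}‖ ≤ Λ for i = 1, 2. Then there exists a constant C, depending only on d, α, Λ, G and L, such that for every unit vector s ∈ ℝ^d: | g(σ_1^{−1}s / |σ_1^{−1}s|) / ( |σ_1^{−1}s|^{d+α} · det σ_1 ) − g(σ_2^{−1}s / |σ_2^{−1}s|) / ( |σ_2^{−1}s|^{d+α} · det σ_2 ) | ≤ C ‖σ_1 − σ_2‖. -/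

import Mathlib

set_option maxHeartbeats 1000000

/-- The action of a d×d matrix on the Euclidean space `ℝ^d`. -/
noncomputable def matAct (d : ℕ) (M : Matrix (Fin d) (Fin d) ℝ)
    (v : EuclideanSpace ℝ (Fin d)) : EuclideanSpace ℝ (Fin d) :=
  (EuclideanSpace.equiv (Fin d) ℝ).symm (M.mulVec ((EuclideanSpace.equiv (Fin d) ℝ) v))

/-- The operator norm of a d×d real matrix, acting on the Euclidean space `ℝ^d`. -/
noncomputable def matOpNorm (d : ℕ) (M : Matrix (Fin d) (Fin d) ℝ) : ℝ :=
  ‖(Matrix.toEuclideanLin M).toContinuousLinearMap‖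

section Helpers

variable {d : ℕ}

lemma matAct_eq (M : Matrix (Fin d) (Fin d) ℝ) (v : EuclideanSpace ℝ (Fin d)) :
    matAct d M v = (Matrix.toEuclideanLin M).toContinuousLinearMap v := rfl

lemma norm_matAct_le (M : Matrix (Fin d) (Fin d) ℝ) (v : EuclideanSpace ℝ (Fin d)) :
    ‖matAct d M v‖ ≤ matOpNorm d M * ‖v‖ := by
  rw [matAct_eq]; exact ContinuousLinearMap.le_opNorm _ v

lemma matAct_mul (A B : Matrix (Fin d) (Fin d) ℝ) (v : EuclideanSpace ℝ (Fin d)) :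
    matAct d (A * B) v = matAct d A (matAct d B v) := by
  simp [matAct, Matrix.mulVec_mulVec]
  rw [← Matrix.mulVec_mulVec]; rfl

lemma matAct_sub (A B : Matrix (Fin d) (Fin d) ℝ) (v : EuclideanSpace ℝ (Fin d)) :
    matAct d (A - B) v = matAct d A v - matAct d B v := by
  simp [matAct, Matrix.sub_mulVec]

lemma matAct_one (v : EuclideanSpace ℝ (Fin d)) : matAct d 1 v = v := by
  simp [matAct, Matrix.one_mulVec]

lemma entry_abs_le (M : Matrix (Fin d) (Fin d) ℝ) (i j : Fin d) :
    |M i j| ≤ matOpNorm d M := by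
  have h1 : (matAct d M (EuclideanSpace.single j (1:ℝ))) i = M i j := by
    simp [matAct, Matrix.mulVec_single]
    change M.mulVec (Pi.single j 1) i = M i j
    simp [Matrix.mulVec_single]
  have h2 : M i j = inner ℝ (EuclideanSpace.single i (1:ℝ)) (matAct d M (EuclideanSpace.single j 1)) := by
    rw [EuclideanSpace.inner_single_left]; simp [h1]
  rw [h2]
  calc |inner ℝ (EuclideanSpace.single i (1:ℝ)) (matAct d M (EuclideanSpace.single j 1))|
      ≤ ‖EuclideanSpace.single i (1:ℝ)‖ * ‖matAct d M (EuclideanSpace.single j (1:ℝ))‖ :=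
        abs_real_inner_le_norm _ _
    _ ≤ 1 * (matOpNorm d M * ‖EuclideanSpace.single j (1:ℝ)‖) := by
        rw [EuclideanSpace.norm_single]
        simp only [norm_one, one_mul]
        exact norm_matAct_le _ _
    _ = matOpNorm d M := by rw [EuclideanSpace.norm_single]; simp

lemma abs_det_le_of_bound {M : Matrix (Fin d) (Fin d) ℝ} {r : ℝ} (hr : 0 ≤ r)
    (h : ∀ i j, |M i j| ≤ r) : |M.det| ≤ (d.factorial : ℝ) * r ^ d := by
  rw [Matrix.det_apply]
  calc |∑ σ : Equiv.Perm (Fin d), Equiv.Perm.sign σ • ∏ i, M (σ i) i|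
      ≤ ∑ σ : Equiv.Perm (Fin d), |Equiv.Perm.sign σ • ∏ i, M (σ i) i| :=
        Finset.abs_sum_le_sum_abs _ _
    _ ≤ ∑ _σ : Equiv.Perm (Fin d), r ^ d := by
        apply Finset.sum_le_sum; intro σ _
        have hs : |(Equiv.Perm.sign σ : ℤ) • ∏ i, M (σ i) i| = |∏ i, M (σ i) i| := by
          rcases Int.units_eq_one_or (Equiv.Perm.sign σ) with h1 | h1 <;>
            simp [h1]
        rw [show (Equiv.Perm.sign σ • ∏ i, M (σ i) i) = ((Equiv.Perm.sign σ : ℤ) • ∏ i, M (σ i) i) from rfl, hs,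
          Finset.abs_prod]
        calc ∏ i, |M (σ i) i| ≤ ∏ _i : Fin d, r :=
              Finset.prod_le_prod (fun _ _ => abs_nonneg _) (fun i _ => h _ _)
          _ = r ^ d := by simp
    _ = (d.factorial : ℝ) * r ^ d := by
        rw [Finset.sum_const, Finset.card_univ, Fintype.card_perm]
        simp [Fintype.card_fin, nsmul_eq_mul]

lemma abs_detRow_le (m : Fin d → (Fin d → ℝ)) :
    ‖(Matrix.detRowAlternating : AlternatingMap ℝ (Fin d → ℝ) ℝ (Fin d)) m‖ ≤
      (d.factorial : ℝ) * ∏ i, ‖m i‖ := by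
  have hdet : (Matrix.detRowAlternating : AlternatingMap ℝ (Fin d → ℝ) ℝ (Fin d)) m
      = (Matrix.of m).det := rfl
  rw [hdet, Matrix.det_apply, Real.norm_eq_abs]
  calc |∑ σ : Equiv.Perm (Fin d), Equiv.Perm.sign σ • ∏ i, Matrix.of m (σ i) i|
      ≤ ∑ σ : Equiv.Perm (Fin d), |Equiv.Perm.sign σ • ∏ i, Matrix.of m (σ i) i| :=
        Finset.abs_sum_le_sum_abs _ _
    _ ≤ ∑ _σ : Equiv.Perm (Fin d), ∏ i, ‖m i‖ := by
        apply Finset.sum_le_sum; intro σ _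
        have hs : |(Equiv.Perm.sign σ : ℤ) • ∏ i, Matrix.of m (σ i) i|
            = |∏ i, Matrix.of m (σ i) i| := by
          rcases Int.units_eq_one_or (Equiv.Perm.sign σ) with h1 | h1 <;> simp [h1]
        rw [show (Equiv.Perm.sign σ • ∏ i, Matrix.of m (σ i) i)
            = ((Equiv.Perm.sign σ : ℤ) • ∏ i, Matrix.of m (σ i) i) from rfl, hs,
          Finset.abs_prod]
        calc ∏ i, |Matrix.of m (σ i) i| ≤ ∏ i, ‖m (σ i)‖ := by
              apply Finset.prod_le_prod (fun _ _ => abs_nonneg _)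
              intro i _
              exact (norm_le_pi_norm (m (σ i)) i).trans_eq' (by simp [Matrix.of]; rfl)
          _ = ∏ i, ‖m i‖ := Equiv.prod_comp σ (fun i => ‖m i‖)
    _ = (d.factorial : ℝ) * ∏ i, ‖m i‖ := by
        rw [Finset.sum_const, Finset.card_univ, Fintype.card_perm]
        simp [nsmul_eq_mul]

lemma det_sub_le (hd : 1 ≤ d) {M N : Matrix (Fin d) (Fin d) ℝ} {r : ℝ} (hr : 0 ≤ r)
    (hM : ∀ i j, |M i j| ≤ r) (hN : ∀ i j, |N i j| ≤ r) :
    |M.det - N.det| ≤ (d.factorial : ℝ) * d * r ^ (d - 1) * matOpNorm d (M - N) := by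
  classical
  have hop : 0 ≤ matOpNorm d (M - N) := norm_nonneg _
  set f := (Matrix.detRowAlternating : AlternatingMap ℝ (Fin d → ℝ) ℝ (Fin d)).toMultilinearMap
    with hf
  have H : ∀ m : Fin d → (Fin d → ℝ), ‖f m‖ ≤ (d.factorial : ℝ) * ∏ i, ‖m i‖ :=
    fun m => abs_detRow_le m
  have key := f.norm_image_sub_le_of_bound (C := (d.factorial : ℝ)) (by positivity) H
    (fun i => M i) (fun i => N i)
  have hfM : f (fun i => M i) = M.det := rfl
  have hfN : f (fun i => N i) = N.det := rfl
  rw [hfM, hfN, Real.norm_eq_abs] at key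
  have hMn : ‖(fun i => M i : Fin d → Fin d → ℝ)‖ ≤ r := by
    rw [pi_norm_le_iff_of_nonneg hr]; intro i
    rw [pi_norm_le_iff_of_nonneg hr]; intro j
    exact hM i j
  have hNn : ‖(fun i => N i : Fin d → Fin d → ℝ)‖ ≤ r := by
    rw [pi_norm_le_iff_of_nonneg hr]; intro i
    rw [pi_norm_le_iff_of_nonneg hr]; intro j
    exact hN i j
  have hdiff : ‖(fun i => M i) - (fun i => N i)‖ ≤ matOpNorm d (M - N) := by
    rw [pi_norm_le_iff_of_nonneg hop]; intro i
    rw [pi_norm_le_iff_of_nonneg hop]; intro j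
    exact entry_abs_le (M - N) i j
  refine key.trans ?_
  simp only [Fintype.card_fin]
  have hmax : max ‖(fun i => M i : Fin d → Fin d → ℝ)‖ ‖(fun i => N i : Fin d → Fin d → ℝ)‖ ≤ r :=
    max_le hMn hNn
  gcongr

lemma rpow_lip {Λ p : ℝ} (hΛ : 1 ≤ Λ) (hp : 1 ≤ p) {a b : ℝ}
    (ha : a ∈ Set.Icc Λ⁻¹ Λ) (hb : b ∈ Set.Icc Λ⁻¹ Λ) :
    |a ^ p - b ^ p| ≤ p * Λ ^ (p - 1) * |a - b| := by
  have hΛ0 : (0:ℝ) < Λ := lt_of_lt_of_le one_pos hΛ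
  have hinv : (0:ℝ) < Λ⁻¹ := inv_pos.2 hΛ0
  have hdiff : ∀ x ∈ Set.Icc Λ⁻¹ Λ, DifferentiableAt ℝ (fun t : ℝ => t ^ p) x := by
    intro x hx
    exact Real.differentiableAt_rpow_const_of_ne p (ne_of_gt (lt_of_lt_of_le hinv hx.1))
  have hbound : ∀ x ∈ Set.Icc Λ⁻¹ Λ, ‖deriv (fun t : ℝ => t ^ p) x‖ ≤ p * Λ ^ (p - 1) := by
    intro x hx
    have hx0 : (0:ℝ) < x := lt_of_lt_of_le hinv hx.1
    rw [Real.deriv_rpow_const x p, Real.norm_eq_abs, abs_mul,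
      abs_of_pos (Real.rpow_pos_of_pos hx0 _), abs_of_pos (by linarith : (0:ℝ) < p)]
    have : x ^ (p - 1) ≤ Λ ^ (p - 1) :=
      Real.rpow_le_rpow hx0.le hx.2 (by linarith)
    nlinarith
  have := (convex_Icc Λ⁻¹ Λ).norm_image_sub_le_of_norm_deriv_le hdiff hbound hb ha
  simpa [Real.norm_eq_abs] using this

lemma norm_normalize_sub {E : Type*} [NormedAddCommGroup E] [NormedSpace ℝ E] {a b : E}
    (ha : a ≠ 0) (hb : b ≠ 0) :
    ‖‖a‖⁻¹ • a - ‖b‖⁻¹ • b‖ ≤ 2 / ‖a‖ * ‖a - b‖ := by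
  have hna : 0 < ‖a‖ := norm_pos_iff.mpr ha
  have hnb : 0 < ‖b‖ := norm_pos_iff.mpr hb
  have h1 : ‖a‖⁻¹ • a - ‖b‖⁻¹ • b = ‖a‖⁻¹ • (a - b) + (‖a‖⁻¹ - ‖b‖⁻¹) • b := by
    rw [smul_sub, sub_smul]; abel
  rw [h1]
  have hab : |‖b‖ - ‖a‖| ≤ ‖a - b‖ := by
    have := abs_norm_sub_norm_le b a
    rwa [norm_sub_rev] at this
  have hdiffeq : ‖a‖⁻¹ - ‖b‖⁻¹ = (‖b‖ - ‖a‖) / (‖a‖ * ‖b‖) := by field_simp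
  have h2 : ‖(‖a‖⁻¹ - ‖b‖⁻¹) • b‖ ≤ ‖a - b‖ / ‖a‖ := by
    rw [norm_smul, Real.norm_eq_abs, hdiffeq, abs_div, abs_of_pos (mul_pos hna hnb)]
    have e : |‖b‖ - ‖a‖| / (‖a‖ * ‖b‖) * ‖b‖ = |‖b‖ - ‖a‖| / ‖a‖ := by
      field_simp
    rw [e]
    gcongr
  have h4 : ‖(‖a‖⁻¹ : ℝ) • (a - b)‖ = ‖a - b‖ / ‖a‖ := by
    rw [norm_smul, Real.norm_eq_abs, abs_of_pos (inv_pos.2 hna), inv_mul_eq_div]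
  calc ‖‖a‖⁻¹ • (a - b) + (‖a‖⁻¹ - ‖b‖⁻¹) • b‖
      ≤ ‖(‖a‖⁻¹ : ℝ) • (a - b)‖ + ‖(‖a‖⁻¹ - ‖b‖⁻¹) • b‖ := norm_add_le _ _
    _ ≤ ‖a - b‖ / ‖a‖ + ‖a - b‖ / ‖a‖ := by rw [h4]; exact add_le_add le_rfl h2
    _ = 2 / ‖a‖ * ‖a - b‖ := by ring

end Helpers

/-- Lipschitz comparison of the stable-like jump kernel coefficients associated with two
elliptic diffusion matrices: for `g` bounded and Lipschitz on the unit sphere and `σ₁, σ₂`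
invertible with `‖σᵢ‖, ‖σᵢ⁻¹‖ ≤ Λ`, the difference of
`g(σᵢ⁻¹s/|σᵢ⁻¹s|) / (|σᵢ⁻¹s|^{d+α} det σᵢ)` is bounded by `C ‖σ₁ - σ₂‖` uniformly over unit
vectors `s`, with `C` depending only on `d, α, Λ, G, L`. -/
theorem kernel_coefficient_lipschitz (d : ℕ) (hd : 1 ≤ d)
    (α Λ G L : ℝ) (hα : 0 < α) (hΛ : 1 ≤ Λ) (hG : 0 ≤ G) (hL : 0 ≤ L) :
    ∃ C : ℝ, 0 < C ∧
      ∀ g : EuclideanSpace ℝ (Fin d) → ℝ,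
        (∀ u : EuclideanSpace ℝ (Fin d), ‖u‖ = 1 → |g u| ≤ G) →
        (∀ u v : EuclideanSpace ℝ (Fin d), ‖u‖ = 1 → ‖v‖ = 1 →
          |g u - g v| ≤ L * ‖u - v‖) →
      ∀ σ₁ σ₂ : Matrix (Fin d) (Fin d) ℝ, IsUnit σ₁ → IsUnit σ₂ →
        matOpNorm d σ₁ ≤ Λ → matOpNorm d σ₁⁻¹ ≤ Λ →
        matOpNorm d σ₂ ≤ Λ → matOpNorm d σ₂⁻¹ ≤ Λ →
      ∀ s : EuclideanSpace ℝ (Fin d), ‖s‖ = 1 →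
        |g (‖matAct d σ₁⁻¹ s‖⁻¹ • matAct d σ₁⁻¹ s) /
            (‖matAct d σ₁⁻¹ s‖ ^ ((d : ℝ) + α) * σ₁.det) -
          g (‖matAct d σ₂⁻¹ s‖⁻¹ • matAct d σ₂⁻¹ s) /
            (‖matAct d σ₂⁻¹ s‖ ^ ((d : ℝ) + α) * σ₂.det)| ≤
          C * matOpNorm d (σ₁ - σ₂) := by
  have hΛ0 : (0:ℝ) < Λ := lt_of_lt_of_le one_pos hΛ
  have hd1 : (1:ℝ) ≤ (d:ℝ) := by exact_mod_cast hd
  set p := (d:ℝ) + α with hpdef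
  have hp1 : 1 ≤ p := by simp only [hpdef]; linarith
  have hp0 : 0 < p := by linarith
  set K := (d.factorial : ℝ) * Λ ^ d with hKdef
  have hK : 0 < K := mul_pos (by exact_mod_cast d.factorial_pos) (pow_pos hΛ0 d)
  set lowr := (Λ⁻¹ : ℝ) ^ p with hlowrdef
  have hlowr : 0 < lowr := Real.rpow_pos_of_pos (inv_pos.2 hΛ0) p
  set m := lowr / K with hmdef
  have hm : 0 < m := div_pos hlowr hK
  set C₁ := p * Λ ^ (p - 1) * Λ ^ 2 * K + Λ ^ p * ((d.factorial : ℝ) * d * Λ ^ (d - 1))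
    with hC₁def
  have hΛp1 : 0 < Λ ^ (p-1) := Real.rpow_pos_of_pos hΛ0 _
  have hΛp : 0 < Λ ^ p := Real.rpow_pos_of_pos hΛ0 _
  have hC₁ : 0 < C₁ := by
    apply add_pos
    · exact mul_pos (mul_pos (mul_pos hp0 hΛp1) (pow_pos hΛ0 2)) hK
    · exact mul_pos hΛp (mul_pos (mul_pos (by exact_mod_cast d.factorial_pos)
        (by exact_mod_cast (lt_of_lt_of_le one_pos hd : 0 < d))) (pow_pos hΛ0 _))
  set C := 2 * L * Λ ^ 3 / m + G * C₁ / (m * m) + 1 with hCdef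
  have hC : 0 < C := by
    have h1 : 0 ≤ 2 * L * Λ ^ 3 / m :=
      div_nonneg (mul_nonneg (by linarith) (pow_nonneg hΛ0.le 3)) hm.le
    have h2 : 0 ≤ G * C₁ / (m * m) :=
      div_nonneg (mul_nonneg hG hC₁.le) (mul_nonneg hm.le hm.le)
    simp only [hCdef]; linarith
  refine ⟨C, hC, ?_⟩
  intro g hgG hgL σ₁ σ₂ hu1 hu2 hs1 hs1i hs2 hs2i s hs
  have hdet1 : IsUnit σ₁.det := (Matrix.isUnit_iff_isUnit_det σ₁).1 hu1
  have hdet2 : IsUnit σ₂.det := (Matrix.isUnit_iff_isUnit_det σ₂).1 hu2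
  set δ := matOpNorm d (σ₁ - σ₂) with hδdef
  have hδ0 : 0 ≤ δ := norm_nonneg _
  set x₁ := matAct d σ₁⁻¹ s with hx1def
  set x₂ := matAct d σ₂⁻¹ s with hx2def
  -- norm bounds on x₁, x₂
  have hx1le : ‖x₁‖ ≤ Λ := by
    have := norm_matAct_le σ₁⁻¹ s
    rw [hs, mul_one] at this
    exact this.trans hs1i
  have hx2le : ‖x₂‖ ≤ Λ := by
    have := norm_matAct_le σ₂⁻¹ s
    rw [hs, mul_one] at this
    exact this.trans hs2i
  have hrecover1 : matAct d σ₁ x₁ = s := by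
    rw [hx1def, ← matAct_mul, Matrix.mul_nonsing_inv _ hdet1, matAct_one]
  have hrecover2 : matAct d σ₂ x₂ = s := by
    rw [hx2def, ← matAct_mul, Matrix.mul_nonsing_inv _ hdet2, matAct_one]
  have hx1ge : Λ⁻¹ ≤ ‖x₁‖ := by
    have h1 : (1:ℝ) ≤ Λ * ‖x₁‖ := by
      have := norm_matAct_le σ₁ x₁
      rw [hrecover1, hs] at this
      calc (1:ℝ) ≤ matOpNorm d σ₁ * ‖x₁‖ := this
        _ ≤ Λ * ‖x₁‖ := mul_le_mul_of_nonneg_right hs1 (norm_nonneg _)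
    rw [inv_eq_one_div, div_le_iff₀ hΛ0]
    calc (1:ℝ) ≤ Λ * ‖x₁‖ := h1
      _ = ‖x₁‖ * Λ := mul_comm _ _
  have hx2ge : Λ⁻¹ ≤ ‖x₂‖ := by
    have h1 : (1:ℝ) ≤ Λ * ‖x₂‖ := by
      have := norm_matAct_le σ₂ x₂
      rw [hrecover2, hs] at this
      calc (1:ℝ) ≤ matOpNorm d σ₂ * ‖x₂‖ := this
        _ ≤ Λ * ‖x₂‖ := mul_le_mul_of_nonneg_right hs2 (norm_nonneg _)
    rw [inv_eq_one_div, div_le_iff₀ hΛ0]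
    calc (1:ℝ) ≤ Λ * ‖x₂‖ := h1
      _ = ‖x₂‖ * Λ := mul_comm _ _
  have hinvΛ : (0:ℝ) < Λ⁻¹ := inv_pos.2 hΛ0
  have hr1pos : 0 < ‖x₁‖ := lt_of_lt_of_le hinvΛ hx1ge
  have hr2pos : 0 < ‖x₂‖ := lt_of_lt_of_le hinvΛ hx2ge
  have hx1ne : x₁ ≠ 0 := norm_pos_iff.mp hr1pos
  have hx2ne : x₂ ≠ 0 := norm_pos_iff.mp hr2pos
  -- difference of x's
  have hmat : σ₁⁻¹ - σ₂⁻¹ = σ₁⁻¹ * ((σ₂ - σ₁) * σ₂⁻¹) := by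
    have e1 : σ₂ * σ₂⁻¹ = 1 := Matrix.mul_nonsing_inv _ hdet2
    have e2 : σ₁⁻¹ * σ₁ = 1 := Matrix.nonsing_inv_mul _ hdet1
    calc σ₁⁻¹ - σ₂⁻¹ = σ₁⁻¹ * (σ₂ * σ₂⁻¹) - (σ₁⁻¹ * σ₁) * σ₂⁻¹ := by
          rw [e1, e2, mul_one, one_mul]
      _ = σ₁⁻¹ * ((σ₂ - σ₁) * σ₂⁻¹) := by noncomm_ring
  have hxdiff : ‖x₁ - x₂‖ ≤ Λ ^ 2 * δ := by
    have e : x₁ - x₂ = matAct d σ₁⁻¹ (matAct d (σ₂ - σ₁) x₂) := by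
      rw [hx1def, hx2def, ← matAct_sub, hmat, matAct_mul, matAct_mul, ← hx2def]
    have e2 : matAct d (σ₂ - σ₁) x₂ = -(matAct d (σ₁ - σ₂) x₂) := by
      rw [matAct_sub, matAct_sub]; abel
    calc ‖x₁ - x₂‖ = ‖matAct d σ₁⁻¹ (matAct d (σ₂ - σ₁) x₂)‖ := by rw [e]
      _ ≤ matOpNorm d σ₁⁻¹ * ‖matAct d (σ₂ - σ₁) x₂‖ := norm_matAct_le _ _
      _ = matOpNorm d σ₁⁻¹ * ‖matAct d (σ₁ - σ₂) x₂‖ := by rw [e2, norm_neg]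
      _ ≤ Λ * (δ * Λ) := by
          apply mul_le_mul hs1i ((norm_matAct_le _ _).trans ?_) (norm_nonneg _) hΛ0.le
          exact mul_le_mul_of_nonneg_left hx2le hδ0
      _ = Λ ^ 2 * δ := by ring
  -- unit vectors
  set u₁ := ‖x₁‖⁻¹ • x₁ with hu1def
  set u₂ := ‖x₂‖⁻¹ • x₂ with hu2def
  have hu1n : ‖u₁‖ = 1 := norm_smul_inv_norm (𝕜 := ℝ) hx1ne
  have hu2n : ‖u₂‖ = 1 := norm_smul_inv_norm (𝕜 := ℝ) hx2ne
  have hudiff : ‖u₁ - u₂‖ ≤ 2 * Λ * ‖x₁ - x₂‖ := by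
    refine (norm_normalize_sub hx1ne hx2ne).trans ?_
    apply mul_le_mul_of_nonneg_right _ (norm_nonneg _)
    rw [div_le_iff₀ hr1pos]
    have h1 := mul_le_mul_of_nonneg_left hx1ge hΛ0.le
    rw [mul_inv_cancel₀ (ne_of_gt hΛ0)] at h1
    nlinarith [h1]
  -- determinant bounds
  have hent1 : ∀ i j, |σ₁ i j| ≤ Λ := fun i j => (entry_abs_le σ₁ i j).trans hs1
  have hent2 : ∀ i j, |σ₂ i j| ≤ Λ := fun i j => (entry_abs_le σ₂ i j).trans hs2
  have hent1i : ∀ i j, |σ₁⁻¹ i j| ≤ Λ := fun i j => (entry_abs_le σ₁⁻¹ i j).trans hs1i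
  have hent2i : ∀ i j, |σ₂⁻¹ i j| ≤ Λ := fun i j => (entry_abs_le σ₂⁻¹ i j).trans hs2i
  have hD1le : |σ₁.det| ≤ K := abs_det_le_of_bound hΛ0.le hent1
  have hD2le : |σ₂.det| ≤ K := abs_det_le_of_bound hΛ0.le hent2
  have hD1ile : |σ₁⁻¹.det| ≤ K := abs_det_le_of_bound hΛ0.le hent1i
  have hD2ile : |σ₂⁻¹.det| ≤ K := abs_det_le_of_bound hΛ0.le hent2i
  have hD1ge : 1 / K ≤ |σ₁.det| := by
    have hmul : σ₁.det * σ₁⁻¹.det = 1 := by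
      rw [← Matrix.det_mul, Matrix.mul_nonsing_inv _ hdet1, Matrix.det_one]
    have : (1:ℝ) ≤ |σ₁.det| * K := by
      calc (1:ℝ) = |σ₁.det * σ₁⁻¹.det| := by rw [hmul]; simp
        _ = |σ₁.det| * |σ₁⁻¹.det| := abs_mul _ _
        _ ≤ |σ₁.det| * K := mul_le_mul_of_nonneg_left hD1ile (abs_nonneg _)
    rw [div_le_iff₀ hK]
    linarith
  have hD2ge : 1 / K ≤ |σ₂.det| := by
    have hmul : σ₂.det * σ₂⁻¹.det = 1 := by
      rw [← Matrix.det_mul, Matrix.mul_nonsing_inv _ hdet2, Matrix.det_one]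
    have : (1:ℝ) ≤ |σ₂.det| * K := by
      calc (1:ℝ) = |σ₂.det * σ₂⁻¹.det| := by rw [hmul]; simp
        _ = |σ₂.det| * |σ₂⁻¹.det| := abs_mul _ _
        _ ≤ |σ₂.det| * K := mul_le_mul_of_nonneg_left hD2ile (abs_nonneg _)
    rw [div_le_iff₀ hK]
    linarith
  have hDdiff : |σ₁.det - σ₂.det| ≤ (d.factorial : ℝ) * d * Λ ^ (d - 1) * δ :=
    det_sub_le hd hΛ0.le hent1 hent2
  -- rpow bounds
  have hr1ple : ‖x₁‖ ^ p ≤ Λ ^ p := Real.rpow_le_rpow (norm_nonneg _) hx1le hp0.le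
  have hr2ple : ‖x₂‖ ^ p ≤ Λ ^ p := Real.rpow_le_rpow (norm_nonneg _) hx2le hp0.le
  have hr1pge : lowr ≤ ‖x₁‖ ^ p := Real.rpow_le_rpow hinvΛ.le hx1ge hp0.le
  have hr2pge : lowr ≤ ‖x₂‖ ^ p := Real.rpow_le_rpow hinvΛ.le hx2ge hp0.le
  have hr1ppos : 0 < ‖x₁‖ ^ p := Real.rpow_pos_of_pos hr1pos p
  have hr2ppos : 0 < ‖x₂‖ ^ p := Real.rpow_pos_of_pos hr2pos p
  have hrpdiff : |‖x₁‖ ^ p - ‖x₂‖ ^ p| ≤ p * Λ ^ (p - 1) * ‖x₁ - x₂‖ := by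
    refine (rpow_lip hΛ hp1 ⟨hx1ge, hx1le⟩ ⟨hx2ge, hx2le⟩).trans ?_
    exact mul_le_mul_of_nonneg_left (abs_norm_sub_norm_le x₁ x₂)
      (mul_pos hp0 hΛp1).le
  -- A's
  set A₁ := ‖x₁‖ ^ p * σ₁.det with hA1def
  set A₂ := ‖x₂‖ ^ p * σ₂.det with hA2def
  have habsA1 : |A₁| = ‖x₁‖ ^ p * |σ₁.det| := by
    rw [hA1def, abs_mul, abs_of_pos hr1ppos]
  have habsA2 : |A₂| = ‖x₂‖ ^ p * |σ₂.det| := by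
    rw [hA2def, abs_mul, abs_of_pos hr2ppos]
  have hA1ge : m ≤ |A₁| := by
    rw [habsA1, hmdef, div_eq_mul_one_div]
    exact mul_le_mul hr1pge hD1ge (by positivity) hr1ppos.le
  have hA2ge : m ≤ |A₂| := by
    rw [habsA2, hmdef, div_eq_mul_one_div]
    exact mul_le_mul hr2pge hD2ge (by positivity) hr2ppos.le
  have hA1ne : A₁ ≠ 0 := by
    intro h; rw [h, abs_zero] at hA1ge; linarith
  have hA2ne : A₂ ≠ 0 := by
    intro h; rw [h, abs_zero] at hA2ge; linarith
  have hAdiff : |A₁ - A₂| ≤ C₁ * δ := by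
    have e : A₁ - A₂ = (‖x₁‖ ^ p - ‖x₂‖ ^ p) * σ₁.det + ‖x₂‖ ^ p * (σ₁.det - σ₂.det) := by
      rw [hA1def, hA2def]; ring
    calc |A₁ - A₂| ≤ |(‖x₁‖ ^ p - ‖x₂‖ ^ p) * σ₁.det| + |‖x₂‖ ^ p * (σ₁.det - σ₂.det)| := by
          rw [e]; exact abs_add_le _ _
      _ = |‖x₁‖ ^ p - ‖x₂‖ ^ p| * |σ₁.det| + ‖x₂‖ ^ p * |σ₁.det - σ₂.det| := by
          rw [abs_mul, abs_mul, abs_of_pos hr2ppos]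
      _ ≤ (p * Λ ^ (p - 1) * (Λ ^ 2 * δ)) * K +
            Λ ^ p * ((d.factorial : ℝ) * d * Λ ^ (d - 1) * δ) := by
          apply add_le_add
          · exact mul_le_mul (hrpdiff.trans (mul_le_mul_of_nonneg_left hxdiff
              (mul_pos hp0 hΛp1).le)) hD1le (abs_nonneg _)
              (by positivity)
          · exact mul_le_mul hr2ple hDdiff (abs_nonneg _) hΛp.le
      _ = C₁ * δ := by rw [hC₁def]; ring
  -- g bounds
  have hgdiff : |g u₁ - g u₂| ≤ L * (2 * Λ * (Λ ^ 2 * δ)) := by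
    refine (hgL u₁ u₂ hu1n hu2n).trans ?_
    apply mul_le_mul_of_nonneg_left _ hL
    exact hudiff.trans (mul_le_mul_of_nonneg_left hxdiff (by positivity))
  have hgu2 : |g u₂| ≤ G := hgG u₂ hu2n
  -- final assembly
  have key : g u₁ / A₁ - g u₂ / A₂ = (g u₁ - g u₂) / A₁ + g u₂ * ((A₂ - A₁) / (A₁ * A₂)) := by
    field_simp
    ring
  have hT1 : |g u₁ - g u₂| / |A₁| ≤ 2 * L * Λ ^ 3 / m * δ := by
    have := div_le_div₀ (by positivity) hgdiff hm hA1ge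
    refine this.trans ?_
    exact le_of_eq (by ring)
  have hT2 : |g u₂| * (|A₂ - A₁| / (|A₁| * |A₂|)) ≤ G * C₁ / (m * m) * δ := by
    have h1 : |A₂ - A₁| = |A₁ - A₂| := abs_sub_comm _ _
    have h2 : |A₂ - A₁| / (|A₁| * |A₂|) ≤ C₁ * δ / (m * m) := by
      rw [h1]
      exact div_le_div₀ (by positivity) hAdiff (mul_pos hm hm)
        (mul_le_mul hA1ge hA2ge hm.le (abs_nonneg _))
    calc |g u₂| * (|A₂ - A₁| / (|A₁| * |A₂|)) ≤ G * (C₁ * δ / (m * m)) :=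
        mul_le_mul hgu2 h2 (by positivity) hG
      _ = G * C₁ / (m * m) * δ := by ring
  calc |g u₁ / A₁ - g u₂ / A₂|
      ≤ |g u₁ - g u₂| / |A₁| + |g u₂| * (|A₂ - A₁| / (|A₁| * |A₂|)) := by
        rw [key]
        refine (abs_add_le _ _).trans ?_
        simp only [abs_div, abs_mul]
        exact le_refl _
    _ ≤ 2 * L * Λ ^ 3 / m * δ + G * C₁ / (m * m) * δ := add_le_add hT1 hT2
    _ ≤ C * δ := by
        have : C * δ = 2 * L * Λ ^ 3 / m * δ + G * C₁ / (m * m) * δ + δ := by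
          rw [hCdef]; ring
        linarith
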